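/- Schur's majorization theorem: The diagonal entries of an n×n Hermitian matrix are majorized by its eigenvalues. -/

import Mathlib

/-- The sum of the `k` largest entries of `x`. -/
noncomputable def kLargestSum {n : ℕ} (x : Fin n → ℝ) (k : ℕ) : ℝ :=
  ∑ i ∈ Finset.univ.filter (fun i : Fin n => n - k ≤ (i : ℕ)), (x ∘ Tuple.sort x) i

/-- `x` is majorized by `y`. -/
noncomputable def Majorizes {n : ℕ} (x y : Fin n → ℝ) : Prop :=
  (∀ k, k ≤ n → kLargestSum x k ≤ kLargestSum y k) ∧ ∑ i, x i = ∑ i, y i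

lemma kLargest_eq_set {n : ℕ} (x : Fin n → ℝ) (k : ℕ) :
    kLargestSum x k = ∑ i ∈ (Finset.univ.filter (fun i : Fin n => n - k ≤ (i : ℕ))).image
      (Tuple.sort x), x i := by
  rw [Finset.sum_image (fun a _ b _ h => (Tuple.sort x).injective h)]
  rfl

lemma card_filter_top' {n k : ℕ} (hk : k ≤ n) :
    (Finset.univ.filter (fun i : Fin n => n - k ≤ (i : ℕ))).card = k := by
  rcases Nat.eq_zero_or_pos k with rfl | hk0
  · rw [Finset.card_eq_zero, Finset.filter_eq_empty_iff]
    intro i _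
    have := i.isLt
    omega
  have hn : 0 < n := lt_of_lt_of_le hk0 hk
  have : (Finset.univ.filter (fun i : Fin n => n - k ≤ (i : ℕ))) =
      Finset.Ici (⟨n - k, by omega⟩ : Fin n) := by
    ext i; simp [Fin.le_def]
  rw [this, Fin.card_Ici]
  simp
  omega

lemma key_lemma {n k : ℕ} (hk : k ≤ n) (lam c : Fin n → ℝ)
    (hc0 : ∀ j, 0 ≤ c j) (hc1 : ∀ j, c j ≤ 1) (hsum : ∑ j, c j = k) :
    ∑ j, c j * lam j ≤ kLargestSum lam k := by
  rcases Nat.eq_zero_or_pos k with rfl | hk0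
  · have hz : ∀ j ∈ Finset.univ, c j = 0 := by
      intro j _
      have := (Finset.sum_eq_zero_iff_of_nonneg (fun j _ => hc0 j)).mp (by simpa using hsum)
      exact this j (Finset.mem_univ j)
    have h1 : ∑ j, c j * lam j = 0 :=
      Finset.sum_eq_zero (fun j _ => by rw [hz j (Finset.mem_univ j), zero_mul])
    have h2 : kLargestSum lam 0 = 0 := by
      unfold kLargestSum
      rw [Finset.sum_eq_zero]
      intro i hi
      simp at hi
      omega
    rw [h1, h2]
  have hn : 0 < n := lt_of_lt_of_le hk0 hk
  set σ := Tuple.sort lam with hσ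
  set F := Finset.univ.filter (fun i : Fin n => n - k ≤ (i : ℕ)) with hF
  set Top := F.image σ with hTop
  set m : Fin n := ⟨n - k, by omega⟩ with hm
  set t := lam (σ m) with ht
  have hmemTop : ∀ j, j ∈ Top ↔ n - k ≤ (σ.symm j : ℕ) := by
    intro j
    constructor
    · rintro hj
      obtain ⟨i, hi, rfl⟩ := Finset.mem_image.mp hj
      simp only [hF, Finset.mem_filter] at hi
      simpa using hi.2
    · intro h
      refine Finset.mem_image.mpr ⟨σ.symm j, ?_, by simp⟩
      simp only [hF, Finset.mem_filter, Finset.mem_univ, true_and]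
      exact h
  have hcardTop : Top.card = k := by
    rw [hTop, Finset.card_image_of_injective _ σ.injective, card_filter_top' hk]
  have hmono := Tuple.monotone_sort lam
  have h1 : ∀ j ∈ Top, t ≤ lam j := by
    intro j hj
    have h := (hmemTop j).mp hj
    have : lam (σ (σ.symm j)) = lam j := by simp
    rw [← this]
    exact hmono (show m ≤ σ.symm j from h)
  have h2 : ∀ j, j ∉ Top → lam j ≤ t := by
    intro j hj
    have h : ¬ (n - k ≤ (σ.symm j : ℕ)) := fun h => hj ((hmemTop j).mpr h)
    have : lam (σ (σ.symm j)) = lam j := by simp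
    rw [← this]
    have hlt : (σ.symm j : ℕ) < n - k := by omega
    exact hmono (le_of_lt (show σ.symm j < m by rw [Fin.lt_def]; simpa [hm] using hlt))
  set e : Fin n → ℝ := fun j => if j ∈ Top then 1 else 0 with he
  have hesum : ∑ j, e j = (k : ℝ) := by
    simp [he, Finset.sum_ite_mem, hcardTop]
  have helam : ∑ j, e j * lam j = ∑ j ∈ Top, lam j := by
    simp [he, ite_mul, zero_mul, one_mul, Finset.sum_ite_mem]
  have main : ∑ j, (c j - e j) * (lam j - t) ≤ 0 := by
    apply Finset.sum_nonpos
    intro j _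
    by_cases hj : j ∈ Top
    · have : e j = 1 := by simp [he, hj]
      rw [this]
      exact mul_nonpos_of_nonpos_of_nonneg (by linarith [hc1 j]) (by linarith [h1 j hj])
    · have : e j = 0 := by simp [he, hj]
      rw [this]
      exact mul_nonpos_of_nonneg_of_nonpos (by linarith [hc0 j]) (by linarith [h2 j hj])
  have expand : ∑ j, (c j - e j) * (lam j - t) =
      ∑ j, c j * lam j - ∑ j, e j * lam j - t * ((∑ j, c j) - ∑ j, e j) := by
    simp only [sub_mul, mul_sub, Finset.sum_sub_distrib, Finset.mul_sum, mul_comm t, Finset.sum_mul]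
  rw [expand, hsum, hesum, sub_self, mul_zero, sub_zero, helam] at main
  rw [kLargest_eq_set]
  linarith

lemma diag_re (n : ℕ) (A : Matrix (Fin n) (Fin n) ℂ) (hA : A.IsHermitian) (i : Fin n) :
    (A i i).re = ∑ j, ‖(hA.eigenvectorUnitary : Matrix (Fin n) (Fin n) ℂ) i j‖^2
      * hA.eigenvalues j := by
  set U := (hA.eigenvectorUnitary : Matrix (Fin n) (Fin n) ℂ) with hU
  have h1 : A i i = ∑ j, U i j * (hA.eigenvalues j : ℂ) * (starRingEnd ℂ) (U i j) := by
    conv_lhs => rw [hA.spectral_theorem]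
    simp only [Unitary.conjStarAlgAut_apply, Matrix.mul_apply, Matrix.diagonal_apply, Matrix.star_apply,
      Matrix.conjTranspose_apply, Function.comp_apply, RCLike.ofReal_alg]
    refine Finset.sum_congr rfl (fun j _ => ?_)
    rw [Finset.sum_eq_single j (by intro b _ hb; simp [hb]) (by simp)]
    simp only [hU, Matrix.IsHermitian.eigenvectorUnitary_apply, Complex.real_smul, smul_eq_mul,
      mul_one, Matrix.star_apply, RCLike.star_def, if_true]
  rw [h1, Complex.re_sum]
  refine Finset.sum_congr rfl (fun j _ => ?_)
  have h2 : U i j * (hA.eigenvalues j : ℂ) * (starRingEnd ℂ) (U i j)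
      = ((hA.eigenvalues j : ℝ) : ℂ) * (U i j * (starRingEnd ℂ) (U i j)) := by ring
  rw [h2, Complex.mul_conj, ← Complex.ofReal_mul, Complex.ofReal_re,
    Complex.normSq_eq_norm_sq]
  ring

lemma row_sum (n : ℕ) (A : Matrix (Fin n) (Fin n) ℂ) (hA : A.IsHermitian) (i : Fin n) :
    ∑ j, ‖(hA.eigenvectorUnitary : Matrix (Fin n) (Fin n) ℂ) i j‖^2 = 1 := by
  set U := (hA.eigenvectorUnitary : Matrix (Fin n) (Fin n) ℂ) with hU
  have hUU : U * star U = 1 := Matrix.mem_unitaryGroup_iff.mp hA.eigenvectorUnitary.2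
  have e1 : ∑ j, U i j * (starRingEnd ℂ) (U i j) = 1 := by
    have h : (U * star U) i i = (1 : Matrix (Fin n) (Fin n) ℂ) i i := by rw [hUU]
    rw [Matrix.mul_apply, Matrix.one_apply_eq] at h
    simpa [Matrix.star_apply] using h
  have := congrArg Complex.re e1
  rw [Complex.re_sum] at this
  simp only [Complex.mul_conj, Complex.ofReal_re, Complex.one_re] at this
  rw [← this]
  refine Finset.sum_congr rfl (fun j _ => ?_)
  rw [Complex.normSq_eq_norm_sq]

lemma col_sum (n : ℕ) (A : Matrix (Fin n) (Fin n) ℂ) (hA : A.IsHermitian) (j : Fin n) :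
    ∑ i, ‖(hA.eigenvectorUnitary : Matrix (Fin n) (Fin n) ℂ) i j‖^2 = 1 := by
  set U := (hA.eigenvectorUnitary : Matrix (Fin n) (Fin n) ℂ) with hU
  have hUU : star U * U = 1 := Matrix.mem_unitaryGroup_iff'.mp hA.eigenvectorUnitary.2
  have e1 : ∑ i, (starRingEnd ℂ) (U i j) * U i j = 1 := by
    have h : (star U * U) j j = (1 : Matrix (Fin n) (Fin n) ℂ) j j := by rw [hUU]
    rw [Matrix.mul_apply, Matrix.one_apply_eq] at h
    simpa [Matrix.star_apply] using h
  have := congrArg Complex.re e1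
  rw [Complex.re_sum] at this
  simp only [mul_comm, Complex.mul_conj, Complex.ofReal_re, Complex.one_re] at this
  rw [← this]
  refine Finset.sum_congr rfl (fun i _ => ?_)
  rw [Complex.normSq_eq_norm_sq]

theorem schur_majorization (n : ℕ) (A : Matrix (Fin n) (Fin n) ℂ)
    (hA : A.IsHermitian) :
    Majorizes (fun i => (A i i).re) hA.eigenvalues := by
  set s : Fin n → Fin n → ℝ :=
    fun i j => ‖(hA.eigenvectorUnitary : Matrix (Fin n) (Fin n) ℂ) i j‖^2 with hs
  have hs0 : ∀ i j, 0 ≤ s i j := fun i j => by positivity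
  have hdiag : ∀ i, (A i i).re = ∑ j, s i j * hA.eigenvalues j := diag_re n A hA
  have hrow : ∀ i, ∑ j, s i j = 1 := row_sum n A hA
  have hcol : ∀ j, ∑ i, s i j = 1 := col_sum n A hA
  constructor
  · intro k hk
    set d : Fin n → ℝ := fun i => (A i i).re with hd
    set T := (Finset.univ.filter (fun i : Fin n => n - k ≤ (i : ℕ))).image (Tuple.sort d) with hT
    have hTcard : T.card = k := by
      rw [hT, Finset.card_image_of_injective _ (Tuple.sort d).injective, card_filter_top' hk]
    set c : Fin n → ℝ := fun j => ∑ i ∈ T, s i j with hc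
    have hc0 : ∀ j, 0 ≤ c j := fun j => Finset.sum_nonneg (fun i _ => hs0 i j)
    have hc1 : ∀ j, c j ≤ 1 := fun j =>
      (Finset.sum_le_sum_of_subset_of_nonneg (Finset.subset_univ T)
        (fun i _ _ => hs0 i j)).trans_eq (hcol j)
    have hcsum : ∑ j, c j = (k : ℝ) := by
      rw [hc]
      rw [Finset.sum_comm]
      rw [Finset.sum_congr rfl (fun i _ => hrow i)]
      simp [hTcard]
    have h2 : kLargestSum d k = ∑ j, c j * hA.eigenvalues j := by
      rw [kLargest_eq_set]
      calc ∑ i ∈ T, d i = ∑ i ∈ T, ∑ j, s i j * hA.eigenvalues j :=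
            Finset.sum_congr rfl (fun i _ => hdiag i)
        _ = ∑ j, ∑ i ∈ T, s i j * hA.eigenvalues j := Finset.sum_comm
        _ = ∑ j, c j * hA.eigenvalues j := by
            refine Finset.sum_congr rfl (fun j _ => ?_)
            rw [hc, Finset.sum_mul]
    rw [h2]
    exact key_lemma hk hA.eigenvalues c hc0 hc1 hcsum
  · calc ∑ i, (A i i).re = ∑ i, ∑ j, s i j * hA.eigenvalues j :=
          Finset.sum_congr rfl (fun i _ => hdiag i)
      _ = ∑ j, (∑ i, s i j) * hA.eigenvalues j := by
          rw [Finset.sum_comm]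
          exact Finset.sum_congr rfl (fun j _ => (Finset.sum_mul ..).symm)
      _ = ∑ j, hA.eigenvalues j := by
          refine Finset.sum_congr rfl (fun j _ => ?_)
          rw [hcol j, one_mul]
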